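/- Let R_1, …, R_{n+1} be real-valued random variables on a probability space whose joint distribution is exchangeable, i.e., invariant under every permutation of the indices {1, …, n+1}. For k ∈ {1, …, n+1} let R̃_{(k)} denote the k-th order statistic of the full set {R_1, …, R_{n+1}}. Then for every k ∈ {1, …, n+1}, Pr(R_{n+1} ≤ R̃_{(k)}) ≥ k/(n+1). -/

import Mathlib

open MeasureTheory

/-- The `k`-th order statistic (1-based, counted with multiplicity) of the values
`v 0, …, v (m-1)`: the `k`-th smallest element of the list sorted in nondecreasing
order, with junk value `0` when `k` is out of range. -/
noncomputable def orderStat {m : ℕ} (v : Fin m → ℝ) (k : ℕ) : ℝ :=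
  (List.insertionSort (· ≤ ·) (List.ofFn v)).getD (k - 1) 0

/-- If `R 1, …, R (n+1)` are real random variables whose joint distribution is
exchangeable (invariant under every permutation of the indices), then for every
`k ∈ {1, …, n+1}` we have `Pr(R (n+1) ≤ R̃_(k)) ≥ k / (n+1)`, where `R̃_(k)` is the
`k`-th order statistic of the full set `{R 1, …, R (n+1)}`. -/
lemma countP_sorted {p : ℝ → Prop} [DecidablePred p]
    (hp : ∀ a b : ℝ, a ≤ b → p b → p a) :
    ∀ L : List ℝ, L.Pairwise (· ≤ ·) → ∀ m, m < L.length →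
      (p (L.getD m 0) ↔ m < L.countP (fun y => decide (p y))) := by
  intro L
  induction L with
  | nil => intro _ m hm; simp at hm
  | cons a t ih =>
    intro hs m hm
    rw [List.pairwise_cons] at hs
    have hcz : ¬ p a → t.countP (fun y => decide (p y)) = 0 := by
      intro hpa
      rw [List.countP_eq_zero]
      intro b hb
      simpa using fun h => hpa (hp a b (hs.1 b hb) h)
    cases m with
    | zero =>
      simp only [List.getD_cons_zero, List.countP_cons]
      by_cases hpa : p a
      · rw [if_pos (by simpa using hpa)]
        constructor
        · intro _; omega
        · intro _; exact hpa
      · rw [if_neg (by simpa using hpa), hcz hpa]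
        constructor
        · intro h; exact absurd h hpa
        · intro h; omega
    | succ m =>
      simp only [List.getD_cons_succ, List.countP_cons]
      have hm' : m < t.length := by simpa using hm
      rw [ih hs.2 m hm']
      by_cases hpa : p a
      · rw [if_pos (by simpa using hpa)]
        omega
      · rw [if_neg (by simpa using hpa), hcz hpa]
        omega

lemma card_filter_eq_countP {m : ℕ} (v : Fin m → ℝ) (p : ℝ → Prop) [DecidablePred p] :
    (Finset.univ.filter fun i => p (v i)).card
      = (List.ofFn v).countP (fun y => decide (p y)) := by
  rw [List.ofFn_eq_map, List.countP_map]
  simp [Finset.card_filter, List.countP_eq_length_filter, Fin.univ_def, Finset.card]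
  rfl

lemma le_orderStat_iff {m : ℕ} (v : Fin m → ℝ) (k : ℕ) (hk1 : 1 ≤ k) (hk2 : k ≤ m)
    (x : ℝ) : x ≤ orderStat v k ↔ (Finset.univ.filter fun j => v j < x).card < k := by
  have hL : (List.insertionSort (· ≤ ·) (List.ofFn v)).length = m := by
    rw [List.length_insertionSort, List.length_ofFn]
  have hs := List.pairwise_insertionSort (· ≤ ·) (List.ofFn v)
  have hcnt : ((List.insertionSort (· ≤ ·) (List.ofFn v)).countP (fun y => decide (y < x)))
      = (Finset.univ.filter fun j => v j < x).card := by
    rw [card_filter_eq_countP v (fun y => y < x)]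
    exact ((List.perm_insertionSort _ _).countP_eq _)
  have := countP_sorted (p := fun y => y < x)
    (fun a b hab h => lt_of_le_of_lt hab h)
    (List.insertionSort (· ≤ ·) (List.ofFn v)) hs (k - 1) (by omega)
  rw [hcnt] at this
  rw [orderStat, ← not_lt, this, not_lt]
  omega

lemma card_le_orderStat {m : ℕ} (v : Fin m → ℝ) (k : ℕ) (hk1 : 1 ≤ k) (hk2 : k ≤ m) :
    k ≤ (Finset.univ.filter fun i => v i ≤ orderStat v k).card := by
  have hL : (List.insertionSort (· ≤ ·) (List.ofFn v)).length = m := by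
    rw [List.length_insertionSort, List.length_ofFn]
  have hs := List.pairwise_insertionSort (· ≤ ·) (List.ofFn v)
  have hcnt : ((List.insertionSort (· ≤ ·) (List.ofFn v)).countP
        (fun y => decide (y ≤ orderStat v k)))
      = (Finset.univ.filter fun j => v j ≤ orderStat v k).card := by
    rw [card_filter_eq_countP v (fun y => y ≤ orderStat v k)]
    exact ((List.perm_insertionSort _ _).countP_eq _)
  have := countP_sorted (p := fun y => y ≤ orderStat v k)
    (fun a b hab h => hab.trans h)
    (List.insertionSort (· ≤ ·) (List.ofFn v)) hs (k - 1) (by omega)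
  rw [hcnt] at this
  have h0 : orderStat v k ≤ orderStat v k := le_refl _
  rw [orderStat] at h0
  have := this.mp h0
  omega

lemma orderStat_comp {m : ℕ} (v : Fin m → ℝ) (π : Equiv.Perm (Fin m)) (k : ℕ) :
    orderStat (fun j => v (π j)) k = orderStat v k := by
  unfold orderStat
  congr 1
  exact List.Perm.eq_of_pairwise' (hl :=
    ((List.perm_insertionSort _ _).trans ((π.ofFn_comp_perm v).trans
      (List.perm_insertionSort _ _).symm)))
    (List.pairwise_insertionSort _ _) (List.pairwise_insertionSort _ _)

theorem prob_last_le_orderStat_full {Ω : Type*} [MeasurableSpace Ω]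
    (P : Measure Ω) [IsProbabilityMeasure P]
    (n : ℕ) (R : Fin (n + 1) → Ω → ℝ) (hmeas : ∀ i, Measurable (R i))
    (hexch : ∀ π : Equiv.Perm (Fin (n + 1)),
      Measure.map (fun ω => fun i => R (π i) ω) P =
        Measure.map (fun ω => fun i => R i ω) P)
    (k : ℕ) (hk1 : 1 ≤ k) (hk2 : k ≤ n + 1) :
    (k : ENNReal) / ((n : ENNReal) + 1) ≤
      P {ω | R (Fin.last n) ω ≤ orderStat (fun i => R i ω) k} := by
  classical
  set F : Ω → (Fin (n + 1) → ℝ) := fun ω => fun i => R i ω with hF_def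
  have hF : Measurable F := measurable_pi_lambda _ hmeas
  set μ : Measure (Fin (n + 1) → ℝ) := Measure.map F P with hμ_def
  have hμprob : IsProbabilityMeasure μ := Measure.isProbabilityMeasure_map hF.aemeasurable
  set S : Fin (n + 1) → Set (Fin (n + 1) → ℝ) :=
    fun i => {v | v i ≤ orderStat v k} with hS_def
  -- measurability of S i
  have hS : ∀ i, MeasurableSet (S i) := by
    intro i
    have : S i = {v : Fin (n + 1) → ℝ |
        (Finset.univ.filter fun j => v j < v i).card < k} := by
      ext v
      exact le_orderStat_iff v k hk1 hk2 (v i)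
    rw [this]
    have hcard : Measurable fun v : Fin (n + 1) → ℝ =>
        (Finset.univ.filter fun j => v j < v i).card := by
      have : (fun v : Fin (n + 1) → ℝ => (Finset.univ.filter fun j => v j < v i).card)
          = fun v => ∑ j : Fin (n + 1), if v j < v i then 1 else 0 := by
        funext v; rw [Finset.card_filter]
      rw [this]
      exact Finset.measurable_sum _ fun j _ =>
        Measurable.ite (measurableSet_lt (measurable_pi_apply j) (measurable_pi_apply i))
          measurable_const measurable_const
    exact hcard (show MeasurableSet {c : ℕ | c < k} from (Set.to_countable _).measurableSet)
  -- the target probability equals μ (S (Fin.last n))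
  have htarget : P {ω | R (Fin.last n) ω ≤ orderStat (fun i => R i ω) k}
      = μ (S (Fin.last n)) := by
    rw [hμ_def, Measure.map_apply hF (hS _)]
    rfl
  -- all μ (S i) are equal
  have hEq : ∀ i, μ (S i) = μ (S (Fin.last n)) := by
    intro i
    set π : Equiv.Perm (Fin (n + 1)) := Equiv.swap i (Fin.last n) with hπ_def
    set G : (Fin (n + 1) → ℝ) → (Fin (n + 1) → ℝ) := fun v => fun j => v (π j) with hG_def
    have hG : Measurable G := measurable_pi_lambda _ fun j => measurable_pi_apply _
    have hmapG : Measure.map G μ = μ := by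
      rw [hμ_def, Measure.map_map hG hF]
      exact hexch π
    have hpre : G ⁻¹' (S (Fin.last n)) = S i := by
      ext v
      simp only [Set.mem_preimage, hS_def, Set.mem_setOf_eq, hG_def]
      rw [orderStat_comp v π k]
      have : π (Fin.last n) = i := Equiv.swap_apply_right _ _
      rw [this]
    calc μ (S i) = μ (G ⁻¹' (S (Fin.last n))) := by rw [hpre]
      _ = (Measure.map G μ) (S (Fin.last n)) := (Measure.map_apply hG (hS _)).symm
      _ = μ (S (Fin.last n)) := by rw [hmapG]
  -- sum of indicators bound
  have hsum : (k : ENNReal) ≤ ∑ i : Fin (n + 1), μ (S i) := by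
    have h1 : ∀ i : Fin (n + 1), μ (S i) = ∫⁻ v, (S i).indicator 1 v ∂μ := by
      intro i; rw [lintegral_indicator_one (hS i)]
    calc (k : ENNReal) = ∫⁻ _, (k : ENNReal) ∂μ := by
          simp [lintegral_const]
      _ ≤ ∫⁻ v, ∑ i : Fin (n + 1), (S i).indicator 1 v ∂μ := by
          apply lintegral_mono
          intro v
          have hcard := card_le_orderStat v k hk1 hk2
          have : ∑ i : Fin (n + 1), (S i).indicator (1 : (Fin (n+1) → ℝ) → ENNReal) v
              = ((Finset.univ.filter fun i => v i ≤ orderStat v k).card : ENNReal) := by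
            rw [Finset.card_filter]
            push_cast
            apply Finset.sum_congr rfl
            intro i _
            by_cases hvi : v i ≤ orderStat v k
            · simp [Set.indicator_apply, hS_def, hvi]
            · simp [Set.indicator_apply, hS_def, hvi]
          dsimp only
          rw [this]
          exact_mod_cast Nat.cast_le.mpr hcard
      _ = ∑ i : Fin (n + 1), ∫⁻ v, (S i).indicator 1 v ∂μ :=
          lintegral_finset_sum _ fun i _ => (measurable_one.indicator (hS i))
      _ = ∑ i : Fin (n + 1), μ (S i) := by simp_rw [← h1]
  have hsum' : (k : ENNReal) ≤ ((n : ENNReal) + 1) * μ (S (Fin.last n)) := by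
    calc (k : ENNReal) ≤ ∑ i : Fin (n + 1), μ (S i) := hsum
      _ = ∑ _i : Fin (n + 1), μ (S (Fin.last n)) := by
          apply Finset.sum_congr rfl; intro i _; exact hEq i
      _ = ((n : ENNReal) + 1) * μ (S (Fin.last n)) := by
          rw [Finset.sum_const, Finset.card_univ, Fintype.card_fin]
          simp [nsmul_eq_mul]
  rw [htarget]
  rw [ENNReal.div_le_iff_le_mul (Or.inl (by simp)) (Or.inl (by simp))]
  rw [mul_comm] at hsum'
  exact hsum'
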